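/- Let α: U → V be a transmission between supertropical monoids that is injective on (eU) \ {0}. If α has trivial ghost kernel (i.e., α(x) ∈ eV implies x ∈ eU) and V is a semiring, then U is a semiring. -/
import Mathlib


universe u v w

class STM (U : Type u) extends CommMonoid U, Zero U where
  zero_mul' : ∀ x : U, 0 * x = 0
  e : U
  e_idem : e * e = e
  ghost_zero : ∀ x : U, e * x = 0 → x = 0
  le : U → U → Prop
  le_refl : ∀ x : U, le x x
  le_trans : ∀ x y z : U, le x y → le y z → le x z
  le_total : ∀ x y : U, le x y ∨ le y x
  le_antisymm : ∀ x y : U, e * x = x → e * y = y → le x y → le y x → x = y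
  le_e : ∀ x y : U, le x y ↔ le (e * x) (e * y)
  mul_le_mul : ∀ x y z : U, le x y → le (x * z) (y * z)
  zero_le : ∀ x : U, le 0 x

namespace STM

variable {U : Type u} [STM U]

/-- `x` is a ghost element, i.e. `x ∈ eU`. -/
def Ghost (x : U) : Prop := e * x = x

/-- strict inequality for the ordering of the ghost ideal -/
def slt (x y : U) : Prop := le x y ∧ ¬ le y x

open scoped Classical in
/-- the forced addition on a supertropical monoid -/
noncomputable def add (x y : U) : U :=
  if slt (e * x) (e * y) then y
  else if slt (e * y) (e * x) then x
  else e * x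

/-- the supertropical monoid `U` "is" a (supertropical) semiring: the forced
addition is associative and distributive. -/
def IsSemiring (U : Type u) [STM U] : Prop :=
  (∀ x y z : U, add (add x y) z = add x (add y z)) ∧
  (∀ x y z : U, add x y * z = add (x * z) (y * z))

end STM

open STM

namespace STM

variable {W : Type w} [STM W]

lemma ghost_emul' (x : W) : (e : W) * (e * x) = e * x := by
  rw [← mul_assoc, e_idem]

lemma ghost_emul (x : W) : Ghost ((e : W) * x) := ghost_emul' x

lemma slt_irrefl' (x : W) : ¬ slt x x := fun h => h.2 (le_refl x)

lemma eq_of_tie {g h : W} (hg : Ghost g) (hh : Ghost h) (h1 : le g h) (h2 : le h g) : g = h :=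
  le_antisymm g h hg hh h1 h2

lemma slt_trans' {a b c : W} (h1 : slt a b) (h2 : slt b c) : slt a c :=
  ⟨le_trans _ _ _ h1.1 h2.1, fun hca => h2.2 (le_trans _ _ _ hca h1.1)⟩

lemma slt_asymm {a b : W} (h : slt a b) : ¬ slt b a :=
  fun h' => slt_irrefl' a (slt_trans' h h')

lemma trichotomy (x y : W) : slt ((e:W)*x) (e*y) ∨ (e:W)*x = e*y ∨ slt ((e:W)*y) (e*x) := by
  rcases le_total ((e:W)*x) (e*y) with h | h
  · by_cases h' : le ((e:W)*y) (e*x)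
    · exact Or.inr (Or.inl (eq_of_tie (ghost_emul x) (ghost_emul y) h h'))
    · exact Or.inl ⟨h, h'⟩
  · by_cases h' : le ((e:W)*x) (e*y)
    · exact Or.inr (Or.inl (eq_of_tie (ghost_emul x) (ghost_emul y) h' h))
    · exact Or.inr (Or.inr ⟨h, h'⟩)

lemma add_lt {x y : W} (h : slt ((e:W)*x) (e*y)) : add x y = y := by
  unfold add; rw [if_pos h]

lemma add_gt {x y : W} (h : slt ((e:W)*y) (e*x)) : add x y = x := by
  unfold add; rw [if_neg (slt_asymm h), if_pos h]

lemma add_tie {x y : W} (h : (e:W)*x = e*y) : add x y = e*x := by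
  unfold add
  rw [if_neg, if_neg]
  · rw [← h]; exact slt_irrefl' _
  · rw [h]; exact slt_irrefl' _

lemma add_assoc'' (x y z : W) : add (add x y) z = add x (add y z) := by
  rcases trichotomy x y with hxy | hxy | hxy
  · rw [add_lt hxy]
    rcases trichotomy y z with hyz | hyz | hyz
    · rw [add_lt hyz, add_lt (slt_trans' hxy hyz)]
    · rw [add_tie hyz]
      have h1 : slt ((e:W)*x) (e*(e*y)) := by rw [ghost_emul' y]; exact hxy
      rw [add_lt h1]
    · rw [add_gt hyz, add_lt hxy]
  · rw [add_tie hxy]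
    rcases trichotomy y z with hyz | hyz | hyz
    · have hxz : slt ((e:W)*x) (e*z) := by rw [hxy]; exact hyz
      have h1 : slt ((e:W)*(e*x)) (e*z) := by rw [ghost_emul' x]; exact hxz
      rw [add_lt h1, add_lt hyz, add_lt hxz]
    · have hxz : (e:W)*x = e*z := by rw [hxy]; exact hyz
      have h1 : (e:W)*(e*x) = e*z := by rw [ghost_emul' x]; exact hxz
      rw [add_tie h1, add_tie hyz, ghost_emul' x]
      have h2 : (e:W)*x = e*(e*y) := by rw [ghost_emul' y]; exact hxy
      rw [add_tie h2]
    · have hxz : slt ((e:W)*z) (e*x) := by rw [hxy]; exact hyz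
      have h1 : slt ((e:W)*z) (e*(e*x)) := by rw [ghost_emul' x]; exact hxz
      rw [add_gt h1, add_gt hyz, add_tie hxy]
  · rw [add_gt hxy]
    rcases trichotomy x z with hxz | hxz | hxz
    · have hyz : slt ((e:W)*y) (e*z) := slt_trans' hxy hxz
      rw [add_lt hxz, add_lt hyz, add_lt hxz]
    · have hyz : slt ((e:W)*y) (e*z) := by rw [← hxz]; exact hxy
      rw [add_tie hxz, add_lt hyz, add_tie hxz]
    · rw [add_gt hxz]
      rcases trichotomy y z with hyz | hyz | hyz
      · rw [add_lt hyz, add_gt hxz]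
      · rw [add_tie hyz]
        have h1 : slt ((e:W)*(e*y)) (e*x) := by rw [ghost_emul' y]; exact hxy
        rw [add_gt h1]
      · rw [add_gt hyz, add_gt hxy]

lemma ghost_zero' : ((e:W) * 0 : W) = 0 := by rw [mul_comm]; exact zero_mul' e

end STM

/-- A transmission between supertropical monoids. -/
structure IsTransmission {U : Type u} {V : Type v} [STM U] [STM V] (α : U → V) : Prop where
  map_zero : α 0 = 0
  map_one : α 1 = 1
  map_mul : ∀ x y : U, α (x * y) = α x * α y
  map_e : α (STM.e : U) = (STM.e : V)
  mono : ∀ x y : U, Ghost x → Ghost y → STM.le x y → STM.le (α x) (α y)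


/-- If a transmission `α : U → V` is injective on `(eU) \\ {0}`, has trivial ghost kernel,
and `V` is a semiring, then `U` is a semiring. -/
theorem semiring_of_transmission_trivial_ghost_kernel {U : Type u} {V : Type v}
    [STM U] [STM V] (α : U → V) (hα : IsTransmission α)
    (hinj : ∀ x y : U, Ghost x → Ghost y → x ≠ 0 → y ≠ 0 → α x = α y → x = y)
    (hker : ∀ x : U, Ghost (α x) → Ghost x)
    (hV : IsSemiring V) :
    IsSemiring U := by
  constructor
  · exact fun x y z => add_assoc'' x y z
  · -- distributivity
    -- key lemma: strict inequality collapsing after multiplication forces a ghost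
    have key : ∀ x y z : U, slt ((e:U)*x) (e*y) → (e:U)*x*z = e*y*z → Ghost (y*z) := by
      intro x y z h htie
      by_cases heq : α ((e:U)*x) = α ((e:U)*y)
      · by_cases hx0 : (e:U)*x = 0
        · have hx : x = 0 := ghost_zero x hx0
          have : (e:U)*(y*z) = 0 := by
            rw [← mul_assoc, ← htie, hx0, zero_mul']
          have hyz : y*z = 0 := ghost_zero _ this
          rw [hyz]; exact ghost_zero'
        · by_cases hy0 : (e:U)*y = 0
          · exact absurd (hy0 ▸ zero_le ((e:U)*x)) h.2
          · exact absurd (hinj _ _ (ghost_emul x) (ghost_emul y) hx0 hy0 heq ▸ h)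
              (slt_irrefl' _)
      · -- strict inequality in V
        have hgx : Ghost (α ((e:U)*x)) := by
          have : α ((e:U)*((e:U)*x)) = α ((e:U)*x) := by rw [ghost_emul' x]
          unfold Ghost
          rw [← hα.map_e, ← hα.map_mul, this]
        have hgy : Ghost (α ((e:U)*y)) := by
          have : α ((e:U)*((e:U)*y)) = α ((e:U)*y) := by rw [ghost_emul' y]
          unfold Ghost
          rw [← hα.map_e, ← hα.map_mul, this]
        have hle : le (α ((e:U)*x)) (α ((e:U)*y)) :=
          hα.mono _ _ (ghost_emul x) (ghost_emul y) h.1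
        have hslt : slt (α ((e:U)*x)) (α ((e:U)*y)) :=
          ⟨hle, fun hba => heq (eq_of_tie hgx hgy hle hba)⟩
        have h1 : α ((e:U)*x) = (e:V) * α x := by rw [hα.map_mul, hα.map_e]
        have h2 : α ((e:U)*y) = (e:V) * α y := by rw [hα.map_mul, hα.map_e]
        have hslt' : slt ((e:V) * α x) ((e:V) * α y) := h1 ▸ h2 ▸ hslt
        have hd := hV.2 (α x) (α y) (α z)
        rw [add_lt hslt'] at hd
        have he : (e:V) * (α x * α z) = (e:V) * (α y * α z) := by
          have := congrArg α htie
          simpa only [hα.map_mul, hα.map_e, mul_assoc] using this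
        rw [add_tie he] at hd
        -- hd : α y * α z = e * (α x * α z)
        apply hker
        unfold Ghost
        rw [hα.map_mul, hd, ← mul_assoc, e_idem]
    intro x y z
    rcases trichotomy x y with hxy | hxy | hxy
    · rw [add_lt hxy]
      have hle : le ((e:U)*(x*z)) ((e:U)*(y*z)) := by
        rw [← mul_assoc, ← mul_assoc]
        exact mul_le_mul _ _ z hxy.1
      rcases trichotomy (x*z) (y*z) with h | h | h
      · rw [add_lt h]
      · rw [add_tie h]
        have hg : Ghost (y*z) := key x y z hxy (by rw [mul_assoc, mul_assoc]; exact h)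
        rw [← hg, h]
      · exact absurd hle h.2
    · rw [add_tie hxy]
      have h : (e:U)*(x*z) = e*(y*z) := by
        rw [← mul_assoc, ← mul_assoc, hxy]
      rw [add_tie h, ← mul_assoc]
    · rw [add_gt hxy]
      have hle : le ((e:U)*(y*z)) ((e:U)*(x*z)) := by
        rw [← mul_assoc, ← mul_assoc]
        exact mul_le_mul _ _ z hxy.1
      rcases trichotomy (x*z) (y*z) with h | h | h
      · exact absurd hle h.2
      · rw [add_tie h]
        have hg : Ghost (x*z) := key y x z hxy (by rw [mul_assoc, mul_assoc]; exact h.symm)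
        exact hg.symm
      · rw [add_gt h]
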